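/- The normalizer r_k grows linearly: 1 + β̲ n δ² N ⌊k/N⌋ ≤ r_k ≤ 1 + k β̄ φ̄² for all k ≥ 1; consequently there exist constants c₁, c₂ > 0 such that c₁/k ≤ 1/r_k ≤ c₂/k for all k ≥ 1. -/

import Mathlib

open Finset

-- block lower bound
lemma block_lb {n : ℕ} (φ : ℕ → EuclideanSpace ℝ (Fin n))
    (N : ℕ) (δ : ℝ)
    (hPE : ∀ k ≥ 1, ∀ x : EuclideanSpace ℝ (Fin n),
      (N : ℝ) * δ ^ 2 * ‖x‖ ^ 2 ≤ ∑ i ∈ Finset.Ico k (k + N), (inner ℝ (φ i) x : ℝ) ^ 2)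
    (k : ℕ) (hk : 1 ≤ k) :
    (n : ℝ) * ((N : ℝ) * δ ^ 2) ≤ ∑ i ∈ Finset.Ico k (k + N), ‖φ i‖ ^ 2 := by
  set b := EuclideanSpace.basisFun (Fin n) ℝ
  have hnorm : ∀ i, ‖φ i‖ ^ 2 = ∑ j, (inner ℝ (φ i) (b j) : ℝ) ^ 2 := by
    intro i
    have h1 : ∀ j, (inner ℝ (φ i) (b j) : ℝ) = φ i j := by
      intro j
      rw [real_inner_comm, ← OrthonormalBasis.repr_apply_apply]
      simp [b]
    simp only [h1]
    rw [EuclideanSpace.norm_eq, Real.sq_sqrt (by positivity)]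
    simp [sq_abs]
  calc (n : ℝ) * ((N : ℝ) * δ ^ 2)
      = ∑ _j : Fin n, (N : ℝ) * δ ^ 2 * ‖b _j‖ ^ 2 := by
        have : ∀ j : Fin n, ‖b j‖ = 1 := fun j => b.orthonormal.1 j
        simp [this, mul_comm]
    _ ≤ ∑ j : Fin n, ∑ i ∈ Finset.Ico k (k + N), (inner ℝ (φ i) (b j) : ℝ) ^ 2 :=
        Finset.sum_le_sum fun j _ => hPE k hk (b j)
    _ = ∑ i ∈ Finset.Ico k (k + N), ∑ j : Fin n, (inner ℝ (φ i) (b j) : ℝ) ^ 2 :=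
        Finset.sum_comm
    _ = ∑ i ∈ Finset.Ico k (k + N), ‖φ i‖ ^ 2 := by simp [hnorm]

theorem rpfi_normalizer_linear_growth
    {n : ℕ} (hn : 1 ≤ n)
    (φ : ℕ → EuclideanSpace ℝ (Fin n)) (φbar : ℝ) (hφ : ∀ k, ‖φ k‖ ≤ φbar)
    (N : ℕ) (hN : 1 ≤ N) (δ : ℝ) (hδ : 0 < δ)
    (hPE : ∀ k ≥ 1, ∀ x : EuclideanSpace ℝ (Fin n),
      (N : ℝ) * δ ^ 2 * ‖x‖ ^ 2 ≤ ∑ i ∈ Finset.Ico k (k + N), (inner ℝ (φ i) x : ℝ) ^ 2)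
    (β : ℕ → ℝ) (βl βu : ℝ) (hβl : 0 < βl) (hβ : ∀ k, βl ≤ β k ∧ β k ≤ βu)
    (r : ℕ → ℝ) (hr : ∀ k, r k = 1 + ∑ i ∈ Finset.Icc 1 k, β i * ‖φ i‖ ^ 2) :
    (∀ k : ℕ, 1 ≤ k →
        1 + βl * n * δ ^ 2 * (N * (k / N) : ℕ) ≤ r k ∧ r k ≤ 1 + k * βu * φbar ^ 2) ∧
      ∃ c₁ > 0, ∃ c₂ > 0, ∀ k : ℕ, 1 ≤ k →
        c₁ / k ≤ 1 / r k ∧ 1 / r k ≤ c₂ / k := by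
  have hφbar : 0 ≤ φbar := le_trans (norm_nonneg _) (hφ 0)
  -- cumulative block lower bound
  have hcum : ∀ m : ℕ, (m : ℝ) * ((n : ℝ) * ((N : ℝ) * δ ^ 2)) ≤
      ∑ i ∈ Finset.Ico 1 (1 + m * N), ‖φ i‖ ^ 2 := by
    intro m
    induction m with
    | zero => simp
    | succ m ih =>
      have hsplit : ∑ i ∈ Finset.Ico 1 (1 + m * N), ‖φ i‖ ^ 2
          + ∑ i ∈ Finset.Ico (1 + m * N) (1 + (m+1) * N), ‖φ i‖ ^ 2
          = ∑ i ∈ Finset.Ico 1 (1 + (m+1) * N), ‖φ i‖ ^ 2 := by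
        apply Finset.sum_Ico_consecutive
        · exact Nat.le_add_right 1 _
        · have h : (m+1) * N = m * N + N := by ring
          omega
      have hb := block_lb φ N δ hPE (1 + m * N) (by omega)
      have heq : 1 + m * N + N = 1 + (m+1) * N := by ring
      rw [heq] at hb
      push_cast
      nlinarith [hb, ih]
  -- nonnegativity of summands
  have hsq : ∀ i, (0:ℝ) ≤ ‖φ i‖ ^ 2 := fun i => by positivity
  -- main bounds on r
  have hmain : ∀ k : ℕ, 1 ≤ k →
      1 + βl * n * δ ^ 2 * (N * (k / N) : ℕ) ≤ r k ∧ r k ≤ 1 + k * βu * φbar ^ 2 := by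
    intro k hk
    constructor
    · rw [hr k]
      have hsub : Finset.Ico 1 (1 + (k / N) * N) ⊆ Finset.Icc 1 k := by
        intro i hi
        simp only [Finset.mem_Ico, Finset.mem_Icc] at hi ⊢
        have := Nat.div_mul_le_self k N
        omega
      have h1 : ((k / N : ℕ) : ℝ) * ((n : ℝ) * ((N : ℝ) * δ ^ 2)) ≤
          ∑ i ∈ Finset.Icc 1 k, ‖φ i‖ ^ 2 :=
        le_trans (hcum (k / N))
          (Finset.sum_le_sum_of_subset_of_nonneg hsub (fun i _ _ => hsq i))
      have h2 : βl * ∑ i ∈ Finset.Icc 1 k, ‖φ i‖ ^ 2 ≤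
          ∑ i ∈ Finset.Icc 1 k, β i * ‖φ i‖ ^ 2 := by
        rw [Finset.mul_sum]
        exact Finset.sum_le_sum fun i _ => mul_le_mul_of_nonneg_right (hβ i).1 (hsq i)
      have : βl * (((k / N : ℕ) : ℝ) * ((n : ℝ) * ((N : ℝ) * δ ^ 2))) ≤
          ∑ i ∈ Finset.Icc 1 k, β i * ‖φ i‖ ^ 2 :=
        le_trans (mul_le_mul_of_nonneg_left h1 hβl.le) h2
      push_cast
      push_cast at this
      nlinarith [this]
    · rw [hr k]
      have h3 : ∑ i ∈ Finset.Icc 1 k, β i * ‖φ i‖ ^ 2 ≤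
          ∑ i ∈ Finset.Icc 1 k, βu * φbar ^ 2 := by
        apply Finset.sum_le_sum
        intro i _
        have hb1 : 0 ≤ β i := le_trans hβl.le (hβ i).1
        have hb2 : ‖φ i‖ ^ 2 ≤ φbar ^ 2 := by
          have := hφ i; nlinarith [norm_nonneg (φ i)]
        exact mul_le_mul (hβ i).2 hb2 (hsq i) (le_trans hb1 (hβ i).2)
      rw [Finset.sum_const, Nat.card_Icc] at h3
      simp only [Nat.add_sub_cancel, nsmul_eq_mul] at h3
      nlinarith [h3]
  refine ⟨hmain, ?_⟩
  -- positivity of r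
  have hrpos : ∀ k : ℕ, 1 ≤ k → (1:ℝ) ≤ r k := by
    intro k hk
    have := (hmain k hk).1
    have ha : (0:ℝ) ≤ βl * n * δ ^ 2 * (N * (k / N) : ℕ) := by positivity
    linarith
  have hn' : (0:ℝ) < n := by exact_mod_cast Nat.lt_of_lt_of_le Nat.zero_lt_one hn
  have hN' : (0:ℝ) < N := by exact_mod_cast Nat.lt_of_lt_of_le Nat.zero_lt_one hN
  set a : ℝ := βl * n * δ ^ 2 with ha_def
  have ha : 0 < a := mul_pos (mul_pos hβl hn') (pow_pos hδ 2)
  set c : ℝ := min (1 / (2 * N)) (a / 2) with hc_def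
  have hc : 0 < c := lt_min (by positivity) (by positivity)
  -- r k ≥ c * k
  have hlin : ∀ k : ℕ, 1 ≤ k → c * k ≤ r k := by
    intro k hk
    by_cases hk2 : (k : ℝ) ≤ 2 * N
    · have h0 : c * k ≤ 1 := by
        have h1 : c ≤ 1 / (2 * N) := min_le_left _ _
        have h2 : c * k ≤ (1 / (2 * N)) * (2 * N) :=
          mul_le_mul h1 hk2 (Nat.cast_nonneg k) (by positivity)
        rwa [one_div_mul_cancel (by positivity : (2*(N:ℝ)) ≠ 0)] at h2
      linarith [hrpos k hk]
    · push_neg at hk2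
      have h1 := (hmain k hk).1
      have hlt : k < k / N * N + N := Nat.lt_div_mul_add (show 0 < N by omega)
      have hdm : (k : ℝ) - N < ((N * (k / N) : ℕ) : ℝ) := by
        push_cast
        have : ((k:ℝ)) < (k / N : ℕ) * N + N := by exact_mod_cast hlt
        linarith
      have hkN : (k : ℝ) / 2 ≤ (k : ℝ) - N := by linarith
      have h2 : c ≤ a / 2 := min_le_right _ _
      have h3 : a * ((k:ℝ) - N) ≤ a * ((N * (k / N) : ℕ) : ℝ) :=
        mul_le_mul_of_nonneg_left hdm.le ha.le
      have h4 := mul_le_mul_of_nonneg_left hkN ha.le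
      calc c * k ≤ (a / 2) * k := mul_le_mul_of_nonneg_right h2 (Nat.cast_nonneg k)
        _ = a * ((k:ℝ) / 2) := by ring
        _ ≤ a * ((N * (k / N) : ℕ) : ℝ) := by linarith
        _ ≤ 1 + a * ((N * (k / N) : ℕ) : ℝ) := by linarith
        _ ≤ r k := h1
  have hβu : 0 < βu := lt_of_lt_of_le hβl ((hβ 0).1.trans (hβ 0).2)
  refine ⟨1 / (1 + βu * φbar ^ 2), by positivity, 1 / c, by positivity, ?_⟩
  intro k hk
  have hkpos : (0:ℝ) < k := by exact_mod_cast hk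
  have hk1 : (1:ℝ) ≤ k := by exact_mod_cast hk
  have hrk : (0:ℝ) < r k := lt_of_lt_of_le one_pos (hrpos k hk)
  have hd : (0:ℝ) < 1 + βu * φbar ^ 2 := by positivity
  constructor
  · have hub := (hmain k hk).2
    have h5 : r k ≤ k * (1 + βu * φbar ^ 2) := by nlinarith [mul_nonneg hβu.le (sq_nonneg φbar)]
    rw [div_le_div_iff₀ hkpos hrk, one_mul]
    calc (1 / (1 + βu * φbar ^ 2)) * r k
        ≤ (1 / (1 + βu * φbar ^ 2)) * ((k:ℝ) * (1 + βu * φbar ^ 2)) :=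
          mul_le_mul_of_nonneg_left h5 (by positivity)
      _ = (k:ℝ) := by field_simp
  · have h6 := hlin k hk
    rw [div_le_div_iff₀ hrk hkpos, one_mul]
    calc (k:ℝ) = (1/c) * (c * k) := by field_simp
      _ ≤ (1/c) * r k := mul_le_mul_of_nonneg_left h6 (by positivity)
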